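/- Fix n ≥ 1 and an n×n integer matrix B0. Suppose the seed (B_t,(x_{1;t},…,x_{n;t})) at a vertex t is reached from the initial seed (B0,(x_1,…,x_n)) along some word, with all cluster variables encountered nonzero, and let t' be obtained from t by one further mutation in direction k ∈ {1,…,n}, with cluster variables x_{j;t'} (so x_{j;t'} = x_{j;t} for j ≠ k). Suppose p_1,…,p_n are Laurent expansions of x_{1;t},…,x_{n;t} with respect to the initial cluster (x_1,…,x_n), and p'_k is a Laurent expansion of x_{k;t'} with respect to the initial cluster. Then for every i ∈ {1,…,n}: m_i(p'_k) = −m_i(p_k) + max( Σ_ℓ m_i(p_ℓ)·[(B_t)_{ℓk}]_+ , Σ_ℓ m_i(p_ℓ)·[−(B_t)_{ℓk}]_+ ). In particular, writing M_t for the matrix with (i,j)-entry m_i(p_j), the M-matrices satisfy M_{t'} = M_t·J_k + max( M_t·[(B_t)^{•k}]_+, M_t·[(−B_t)^{•k}]_+ ), with initial condition M_{t_0} equal to the identity matrix. -/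

import Mathlib

open Matrix

/-- The ambient field `K = Frac(ℚ[x₁,…,xₙ])` of rational functions in `n` variables. -/
abbrev K (n : ℕ) := FractionRing (MvPolynomial (Fin n) ℚ)

/-- The initial cluster: the images `x₁,…,xₙ` of the polynomial variables in `K`. -/
noncomputable def xinit (n : ℕ) : Fin n → K n :=
  fun i => algebraMap (MvPolynomial (Fin n) ℚ) (K n) (MvPolynomial.X i)

/-- Laurent polynomials in `n` variables over `ℚ`: the monoid algebra `ℚ[ℤ^n]`. -/
abbrev LaurentPoly (n : ℕ) := AddMonoidAlgebra ℚ (Fin n →₀ ℤ)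

/-- Evaluation of a Laurent polynomial at a tuple `u` of elements of `K`
(negative exponents use inversion in the field `K`). -/
noncomputable def lEval {n : ℕ} (u : Fin n → K n) (p : LaurentPoly n) : K n :=
  p.coeff.sum fun d c => c • ∏ l, u l ^ (d l)

/-- `p` is a Laurent expansion of `z` with respect to the tuple `u`. -/
def IsLaurentExpansion {n : ℕ} (u : Fin n → K n) (p : LaurentPoly n) (z : K n) : Prop :=
  lEval u p = z

/-- For a nonzero Laurent polynomial `p`, the maximal exponent of the `i`-th variable
(`m_i(p)`, the `i`-th entry of the m-vector). -/
noncomputable def maxExp {n : ℕ} (p : LaurentPoly n) (hp : p ≠ 0) (i : Fin n) : ℤ :=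
  p.coeff.support.sup' (Finsupp.support_nonempty_iff.mpr
    (fun h => hp (by rw [← AddMonoidAlgebra.ofCoeff_coeff p, h]; rfl))) fun d => d i

/-- For a nonzero Laurent polynomial `p`, the minimal exponent of the `i`-th variable
(its negative is the `i`-th entry of the d-vector). -/
noncomputable def minExp {n : ℕ} (p : LaurentPoly n) (hp : p ≠ 0) (i : Fin n) : ℤ :=
  p.coeff.support.inf' (Finsupp.support_nonempty_iff.mpr
    (fun h => hp (by rw [← AddMonoidAlgebra.ofCoeff_coeff p, h]; rfl))) fun d => d i

/-- Fomin–Zelevinsky matrix mutation `μ_k`. -/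
def mutB {n : ℕ} (k : Fin n) (B : Matrix (Fin n) (Fin n) ℤ) : Matrix (Fin n) (Fin n) ℤ :=
  fun i j =>
    if i = k ∨ j = k then -B i j
    else B i j + max (B i k) 0 * max (B k j) 0 - max (-B i k) 0 * max (-B k j) 0

/-- The new cluster variable produced by the exchange relation in direction `k`:
`x'_k = (∏ u_ℓ^{[B_{ℓk}]₊} + ∏ u_ℓ^{[-B_{ℓk}]₊}) / u_k`. -/
noncomputable def exch {n : ℕ} (k : Fin n) (B : Matrix (Fin n) (Fin n) ℤ)
    (u : Fin n → K n) : K n :=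
  ((∏ l, u l ^ (max (B l k) 0).toNat) + ∏ l, u l ^ (max (-B l k) 0).toNat) / u k

/-- Mutation of a labeled (coefficient-free) seed in direction `k`. -/
noncomputable def seedMut {n : ℕ} (s : Matrix (Fin n) (Fin n) ℤ × (Fin n → K n))
    (k : Fin n) : Matrix (Fin n) (Fin n) ℤ × (Fin n → K n) :=
  (mutB k s.1, Function.update s.2 k (exch k s.1 s.2))

/-- The seed reached from the initial seed `(B0, (x₁,…,xₙ))` along the word `w`. -/
noncomputable def seedAt {n : ℕ} (B0 : Matrix (Fin n) (Fin n) ℤ) (w : List (Fin n)) :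
    Matrix (Fin n) (Fin n) ℤ × (Fin n → K n) :=
  w.foldl seedMut (B0, xinit n)

namespace MV

variable {n : ℕ}

/-- The monomial order on exponents: lexicographic with coordinate `i` moved to front. -/
noncomputable def E (z i : Fin n) (d : Fin n →₀ ℤ) : Lex (Fin n →₀ ℤ) :=
  toLex (Finsupp.domCongr (M := ℤ) (Equiv.swap z i) d)

lemma E_apply (z i : Fin n) (d : Fin n →₀ ℤ) (j : Fin n) :
    ofLex (E z i d) j = d (Equiv.swap z i j) := by
  simp [E, Finsupp.domCongr_apply, Finsupp.equivMapDomain_apply, Equiv.symm_swap]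

lemma E_inj (z i : Fin n) : Function.Injective (E z i) :=
  toLex.injective.comp (Finsupp.domCongr (M := ℤ) (Equiv.swap z i)).injective

lemma E_add (z i : Fin n) (a b : Fin n →₀ ℤ) : E z i (a + b) = E z i a + E z i b := by
  simp only [E, map_add]
  rfl

lemma E_le_coord {z i : Fin n} (hz : ∀ j, z ≤ j) {d e : Fin n →₀ ℤ}
    (h : E z i d ≤ E z i e) : d i ≤ e i := by
  rcases h.lt_or_eq with h | h
  · rw [Finsupp.Lex.lt_iff] at h
    obtain ⟨j, hj1, hj2⟩ := h
    rcases eq_or_lt_of_le (hz j) with rfl | hzj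
    · rw [E_apply, E_apply, Equiv.swap_apply_left] at hj2
      exact hj2.le
    · have := hj1 z hzj
      rw [E_apply, E_apply, Equiv.swap_apply_left] at this
      exact this.le
  · exact le_of_eq (congrArg (fun v => v i) (E_inj z i h))

lemma cne {q : LaurentPoly n} (h : q ≠ 0) : q.coeff ≠ 0 :=
  fun h' => h (by rw [← AddMonoidAlgebra.ofCoeff_coeff q, h']; rfl)

variable (z i : Fin n)

open Classical in
noncomputable def mdeg (q : LaurentPoly n) : Fin n →₀ ℤ :=
  if h : q = 0 then 0
  else Function.invFun (E z i) (q.coeff.support.sup' (Finsupp.support_nonempty_iff.mpr (cne h)) (E z i))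

noncomputable def mlc (q : LaurentPoly n) : ℚ := q.coeff (mdeg z i q)

variable {z i}

lemma dtop_spec {q : LaurentPoly n} (hq : q ≠ 0) :
    mdeg z i q ∈ q.coeff.support ∧ ∀ d ∈ q.coeff.support, E z i d ≤ E z i (mdeg z i q) := by
  obtain ⟨a, ha, he⟩ := Finset.exists_mem_eq_sup' (Finsupp.support_nonempty_iff.mpr (cne hq)) (E z i)
  have hd : mdeg z i q = a := by
    rw [mdeg, dif_neg hq, he, Function.leftInverse_invFun (E_inj z i)]
  rw [hd]
  exact ⟨ha, fun d hd' => he ▸ Finset.le_sup' (E z i) hd'⟩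

lemma lc_ne_zero {q : LaurentPoly n} (hq : q ≠ 0) : mlc z i q ≠ 0 :=
  Finsupp.mem_support_iff.mp (dtop_spec hq).1

lemma ne_zero_of_lc_pos {q : LaurentPoly n} (h : 0 < mlc z i q) : q ≠ 0 := by
  intro h0
  rw [h0] at h
  simp [mlc] at h

lemma dtop_eq_of {q : LaurentPoly n} {d : Fin n →₀ ℤ} (hmem : q.coeff d ≠ 0)
    (hmax : ∀ e ∈ q.coeff.support, E z i e ≤ E z i d) : q ≠ 0 ∧ mdeg z i q = d := by
  have hq : q ≠ 0 := by
    intro h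
    rw [h] at hmem
    simp at hmem
  have h1 : E z i (mdeg z i q) ≤ E z i d := hmax _ (dtop_spec hq).1
  have h2 : E z i d ≤ E z i (mdeg z i q) := (dtop_spec hq).2 d (Finsupp.mem_support_iff.mpr hmem)
  exact ⟨hq, E_inj z i (le_antisymm h1 h2)⟩

lemma add_eq_top {a b a' b' : Fin n →₀ ℤ} (h1 : E z i a ≤ E z i a') (h2 : E z i b ≤ E z i b')
    (he : a + b = a' + b') : a = a' ∧ b = b' := by
  rcases h1.lt_or_eq with h | h
  · exfalso
    have hlt : E z i (a + b) < E z i (a' + b') := by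
      rw [E_add, E_add]
      exact add_lt_add_of_lt_of_le h h2
    rw [he] at hlt
    exact lt_irrefl _ hlt
  · have ha := E_inj z i h
    subst ha
    exact ⟨rfl, add_left_cancel he⟩

lemma mul_apply_top {q1 q2 : LaurentPoly n} (h1 : q1 ≠ 0) (h2 : q2 ≠ 0) :
    (q1 * q2).coeff (mdeg z i q1 + mdeg z i q2) = mlc z i q1 * mlc z i q2 := by
  classical
  rw [AddMonoidAlgebra.coeff_mul]
  rw [Finsupp.sum, Finset.sum_eq_single_of_mem (mdeg z i q1) (dtop_spec h1).1]
  · rw [Finsupp.sum, Finset.sum_eq_single_of_mem (mdeg z i q2) (dtop_spec h2).1, if_pos rfl]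
    · rfl
    · intro b hb hbne
      refine if_neg fun he => hbne ?_
      exact add_left_cancel he
  · intro a ha hane
    rw [Finsupp.sum]
    refine Finset.sum_eq_zero fun b hb => if_neg fun he => hane ?_
    exact (add_eq_top ((dtop_spec h1).2 a ha) ((dtop_spec h2).2 b hb) he).1

lemma mul_facts {q1 q2 : LaurentPoly n} (h1 : q1 ≠ 0) (h2 : q2 ≠ 0) :
    q1 * q2 ≠ 0 ∧ mdeg z i (q1 * q2) = mdeg z i q1 + mdeg z i q2 ∧
      mlc z i (q1 * q2) = mlc z i q1 * mlc z i q2 := by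
  classical
  have hv : (q1 * q2).coeff (mdeg z i q1 + mdeg z i q2) ≠ 0 := by
    rw [mul_apply_top h1 h2]
    exact mul_ne_zero (lc_ne_zero h1) (lc_ne_zero h2)
  have hmax : ∀ e ∈ (q1 * q2).coeff.support, E z i e ≤ E z i (mdeg z i q1 + mdeg z i q2) := by
    intro e he
    have := AddMonoidAlgebra.support_coeff_mul_subset q1 q2 he
    rw [Finset.mem_add] at this
    obtain ⟨b, hb, c, hc, rfl⟩ := this
    rw [E_add, E_add]
    exact add_le_add ((dtop_spec h1).2 b hb) ((dtop_spec h2).2 c hc)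
  obtain ⟨hne, hd⟩ := dtop_eq_of hv hmax
  refine ⟨hne, hd, ?_⟩
  rw [mlc, hd, mul_apply_top h1 h2]

lemma one_facts : mdeg z i (1 : LaurentPoly n) = 0 ∧ mlc z i (1 : LaurentPoly n) = 1 := by
  have hmem : (1 : LaurentPoly n).coeff 0 = 1 := by
    rw [AddMonoidAlgebra.one_def]
    exact Finsupp.single_eq_same
  have hmax : ∀ e ∈ (1 : LaurentPoly n).coeff.support, E z i e ≤ E z i 0 := by
    intro e he
    have := AddMonoidAlgebra.support_coeff_one_subset he
    rw [Finset.mem_zero] at this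
    rw [this]
  obtain ⟨-, hd⟩ := dtop_eq_of (by rw [hmem]; exact one_ne_zero) hmax
  exact ⟨hd, by rw [mlc, hd, hmem]⟩

lemma pow_facts {q : LaurentPoly n} (hq : q ≠ 0) (hl : 0 < mlc z i q) (m : ℕ) :
    q ^ m ≠ 0 ∧ 0 < mlc z i (q ^ m) ∧
      ∀ j, mdeg z i (q ^ m) j = (m : ℤ) * mdeg z i q j := by
  induction m with
  | zero =>
    rw [pow_zero]
    refine ⟨one_ne_zero, ?_, ?_⟩
    · rw [one_facts.2]; norm_num
    · intro j; rw [one_facts.1]; simp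
  | succ m ih =>
    obtain ⟨hm0, hml, hmd⟩ := ih
    obtain ⟨hx0, hxd, hxl⟩ := mul_facts hm0 hq
    rw [pow_succ]
    refine ⟨hx0, by rw [hxl]; exact mul_pos hml hl, ?_⟩
    intro j
    rw [hxd, Finsupp.add_apply, hmd j]
    push_cast
    ring

lemma prod_facts (p : Fin n → LaurentPoly n) (hp : ∀ l, p l ≠ 0)
    (hl : ∀ l, 0 < mlc z i (p l)) (a : Fin n → ℕ) (s : Finset (Fin n)) :
    (∏ l ∈ s, p l ^ a l) ≠ 0 ∧ 0 < mlc z i (∏ l ∈ s, p l ^ a l) ∧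
      ∀ j, mdeg z i (∏ l ∈ s, p l ^ a l) j = ∑ l ∈ s, (a l : ℤ) * mdeg z i (p l) j := by
  classical
  induction s using Finset.induction with
  | empty =>
    rw [Finset.prod_empty]
    refine ⟨one_ne_zero, by rw [one_facts.2]; norm_num, fun j => by rw [one_facts.1]; simp⟩
  | insert x s' hxs ih =>
    obtain ⟨hs0, hsl, hsd⟩ := ih
    obtain ⟨hp0, hpl, hpd⟩ := pow_facts (hp x) (hl x) (a x)
    rw [Finset.prod_insert hxs]
    obtain ⟨hx0, hxd, hxl⟩ := mul_facts hp0 hs0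
    refine ⟨hx0, by rw [hxl]; exact mul_pos hpl hsl, ?_⟩
    intro j
    rw [hxd, Finsupp.add_apply, hpd j, hsd j, Finset.sum_insert hxs]

lemma add_facts_aux {q1 q2 : LaurentPoly n} (h1 : q1 ≠ 0) (h2 : q2 ≠ 0)
    (hl1 : 0 < mlc z i q1) (hl2 : 0 < mlc z i q2)
    (hle : E z i (mdeg z i q1) ≤ E z i (mdeg z i q2)) :
    q1 + q2 ≠ 0 ∧ 0 < mlc z i (q1 + q2) ∧ mdeg z i (q1 + q2) = mdeg z i q2 := by
  classical
  have hval : 0 < (q1 + q2).coeff (mdeg z i q2) := by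
    rw [AddMonoidAlgebra.coeff_add, Finsupp.add_apply]
    have hq1v : 0 ≤ q1.coeff (mdeg z i q2) := by
      by_cases hm : mdeg z i q2 ∈ q1.coeff.support
      · have hge : E z i (mdeg z i q2) ≤ E z i (mdeg z i q1) := (dtop_spec h1).2 _ hm
        have heq : mdeg z i q1 = mdeg z i q2 := E_inj z i (le_antisymm hle hge)
        rw [← heq]
        exact hl1.le
      · rw [Finsupp.notMem_support_iff.mp hm]
    have hq2v : q2.coeff (mdeg z i q2) = mlc z i q2 := rfl
    rw [hq2v]
    linarith
  have hmax : ∀ e ∈ (q1 + q2).coeff.support, E z i e ≤ E z i (mdeg z i q2) := by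
    intro e he
    rcases Finset.mem_union.mp (Finsupp.support_add he) with h | h
    · exact ((dtop_spec h1).2 e h).trans hle
    · exact (dtop_spec h2).2 e h
  obtain ⟨hne, hd⟩ := dtop_eq_of (ne_of_gt hval) hmax
  exact ⟨hne, by rw [mlc, hd]; exact hval, hd⟩


section Eval

variable {n : ℕ}

lemma smul_bridge (c : ℚ) (x : K n) : c • x = algebraMap ℚ (K n) c * x := by
  exact (map_rat_smul (_instM₂ := Algebra.toModule) (AddMonoidHom.id (K n)) c x).trans (Algebra.smul_def c x)

lemma xinit_ne_zero (l : Fin n) : xinit n l ≠ 0 := by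
  intro h
  exact MvPolynomial.X_ne_zero (R := ℚ) l
    ((map_eq_zero_iff _ (IsFractionRing.injective (MvPolynomial (Fin n) ℚ) (K n))).mp h)

noncomputable def xmon (d : Fin n →₀ ℤ) : K n := ∏ l, xinit n l ^ (d l)

lemma xmon_zero : xmon (0 : Fin n →₀ ℤ) = 1 := by simp [xmon]

lemma xmon_add (a b : Fin n →₀ ℤ) : xmon (a + b) = xmon a * xmon b := by
  rw [xmon, xmon, xmon, ← Finset.prod_mul_distrib]
  refine Finset.prod_congr rfl fun l _ => ?_
  rw [Finsupp.add_apply, zpow_add₀ (xinit_ne_zero l)]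

noncomputable def evalHom (n : ℕ) : LaurentPoly n →ₐ[ℚ] K n :=
  AddMonoidAlgebra.lift ℚ (K n) (Fin n →₀ ℤ)
    { toFun := fun d => xmon (Multiplicative.toAdd d)
      map_one' := xmon_zero
      map_mul' := fun _ _ => xmon_add _ _ }

lemma evalHom_single (d : Fin n →₀ ℤ) (c : ℚ) :
    evalHom n (AddMonoidAlgebra.single d c) = algebraMap ℚ (K n) c * xmon d := by
  rw [evalHom, AddMonoidAlgebra.lift_single, Algebra.smul_def]
  rfl

lemma lEval_eq (q : LaurentPoly n) : lEval (xinit n) q = evalHom n q := by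
  rw [lEval, evalHom, AddMonoidAlgebra.lift_apply]
  refine Finsupp.sum_congr fun d _ => ?_
  rw [smul_bridge, Algebra.smul_def]
  rfl

/-- the embedding of `ℕ`-exponents into `ℤ`-exponents -/
noncomputable def coneMap : (Fin n →₀ ℕ) → (Fin n →₀ ℤ) :=
  Finsupp.mapRange (fun m : ℕ => (m : ℤ)) (by simp)

lemma coneMap_inj : Function.Injective (coneMap (n := n)) := by
  intro a b h
  ext l
  have := congrArg (fun v => v l) h
  simpa [coneMap, Finsupp.mapRange_apply] using this

lemma evalHom_coneMapDomain (f : AddMonoidAlgebra ℚ (Fin n →₀ ℕ)) :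
    evalHom n (AddMonoidAlgebra.mapDomain coneMap f) = algebraMap (MvPolynomial (Fin n) ℚ) (K n) f := by
  induction f using AddMonoidAlgebra.induction_linear with
  | zero => simp [AddMonoidAlgebra.mapDomain_zero]
  | add f g hf hg => rw [AddMonoidAlgebra.mapDomain_add, _root_.map_add, _root_.map_add, hf, hg]
  | single d c =>
    have hmono : (AddMonoidAlgebra.single d c : MvPolynomial (Fin n) ℚ) = MvPolynomial.monomial d c := rfl
    have hC : (algebraMap (MvPolynomial (Fin n) ℚ) (K n)) (MvPolynomial.C c)
        = algebraMap ℚ (K n) c := by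
      rw [← MvPolynomial.algebraMap_eq, ← IsScalarTower.algebraMap_apply]
    rw [AddMonoidAlgebra.mapDomain_single, evalHom_single, hmono, MvPolynomial.monomial_eq, _root_.map_mul, hC]
    congr 1
    rw [Finsupp.prod_fintype _ _ (fun l => pow_zero _), _root_.map_prod, xmon]
    refine Finset.prod_congr rfl fun l _ => ?_
    rw [_root_.map_pow]
    have hcl : coneMap d l = (d l : ℤ) := rfl
    rw [hcl, zpow_natCast]
    rfl

lemma shift_eval (N : Fin n →₀ ℤ) (q : LaurentPoly n) :
    evalHom n (AddMonoidAlgebra.mapDomain (· + N) q) = evalHom n q * xmon N := by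
  induction q using AddMonoidAlgebra.induction_linear with
  | zero => simp [AddMonoidAlgebra.mapDomain_zero]
  | add f g hf hg => rw [AddMonoidAlgebra.mapDomain_add, _root_.map_add, _root_.map_add, hf, hg, add_mul]
  | single d c => rw [AddMonoidAlgebra.mapDomain_single, evalHom_single, evalHom_single, xmon_add,
      mul_assoc]

lemma evalHom_injective : Function.Injective (evalHom n) := by
  rw [injective_iff_map_eq_zero]
  intro q hq0
  by_contra hq
  have hsupp := Finsupp.support_nonempty_iff.mpr (MV.cne hq)
  classical
  set N : Fin n →₀ ℤ :=
    Finsupp.equivFunOnFinite.symm (fun l => (q.coeff.support.sup' hsupp fun d => - d l) ⊔ 0) with hN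
  have hNapply : ∀ l, N l = (q.coeff.support.sup' hsupp fun d => - d l) ⊔ 0 := by
    intro l; rw [hN]; rfl
  set q' := AddMonoidAlgebra.mapDomain (· + N) q with hq'
  have hq'0 : evalHom n q' = 0 := by rw [hq', shift_eval, hq0, zero_mul]
  have hcone : ∀ d ∈ q'.coeff.support, ∀ l, 0 ≤ d l := by
    intro d hd l
    obtain ⟨d0, hd0, rfl⟩ := Finset.mem_image.mp (Finsupp.mapDomain_support (s := q.coeff) hd)
    have h1 : - d0 l ≤ q.coeff.support.sup' hsupp fun d => - d l :=
      Finset.le_sup' (f := fun d => - d l) hd0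
    have h2 : (d0 + N) l = d0 l + N l := Finsupp.add_apply _ _ _
    rw [h2, hNapply l]
    have := le_max_left ((q.coeff.support.sup' hsupp fun d => - d l)) (0 : ℤ)
    omega
  obtain ⟨f, hf⟩ : ∃ f, AddMonoidAlgebra.mapDomain coneMap f = q' := by
    refine ⟨AddMonoidAlgebra.comapDomain coneMap coneMap_inj q',
      AddMonoidAlgebra.mapDomain_comapDomain ?_ coneMap_inj⟩
    intro d hd
    refine ⟨Finsupp.mapRange Int.toNat Int.toNat_zero d, ?_⟩
    ext l
    have h3 : (Int.toNat (d l) : ℤ) = d l := Int.toNat_of_nonneg (hcone d hd l)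
    simpa [coneMap, Finsupp.mapRange_apply] using h3
  have halg : algebraMap (MvPolynomial (Fin n) ℚ) (K n) f = 0 := by
    rw [← evalHom_coneMapDomain, hf]; exact hq'0
  have hf0 : f = 0 :=
    (map_eq_zero_iff _ (IsFractionRing.injective (MvPolynomial (Fin n) ℚ) (K n))).mp halg
  have hq'' : q' = 0 := by rw [← hf, hf0, AddMonoidAlgebra.mapDomain_zero]
  exact hq (AddMonoidAlgebra.mapDomain_injective (add_left_injective N)
    (by rw [← hq', hq'', AddMonoidAlgebra.mapDomain_zero]))

lemma evalHom_ne_zero {q : LaurentPoly n} (hq : q ≠ 0) : evalHom n q ≠ 0 := fun h =>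
  hq (evalHom_injective (by rw [h, _root_.map_zero]))

end Eval

section Pos

variable {n : ℕ} (z i : Fin n)

/-- Positivity cone in `K n`, w.r.t. the monomial order determined by `(z,i)`:
quotients of Laurent polynomials with positive leading coefficients. -/
def PosK (x : K n) : Prop :=
  ∃ f g : LaurentPoly n, 0 < mlc z i f ∧ 0 < mlc z i g ∧ x * evalHom n g = evalHom n f

variable {z i}

lemma mlc_single {d : Fin n →₀ ℤ} {c : ℚ} (hc : c ≠ 0) :
    mlc z i (AddMonoidAlgebra.single d c) = c := by
  have hmem : (AddMonoidAlgebra.single d c : LaurentPoly n).coeff d ≠ 0 := by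
    rw [AddMonoidAlgebra.coeff_single, Finsupp.single_eq_same]; exact hc
  have hmax : ∀ e ∈ (AddMonoidAlgebra.single d c : LaurentPoly n).coeff.support, E z i e ≤ E z i d := by
    intro e he
    have := Finsupp.support_single_subset he
    rw [Finset.mem_singleton] at this
    rw [this]
  obtain ⟨-, hd⟩ := dtop_eq_of hmem hmax
  rw [mlc, hd, AddMonoidAlgebra.coeff_single, Finsupp.single_eq_same]

lemma xmon_single (j : Fin n) : xmon (Finsupp.single j (1 : ℤ)) = xinit n j := by
  rw [xmon, Finset.prod_eq_single j]
  · rw [Finsupp.single_eq_same, zpow_one]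
  · intro l _ hl
    rw [Finsupp.single_eq_of_ne hl, zpow_zero]
  · intro h; exact absurd (Finset.mem_univ j) h

lemma posK_one : PosK z i (1 : K n) := by
  refine ⟨1, 1, ?_, ?_, by rw [_root_.map_one, one_mul]⟩ <;> rw [one_facts.2] <;> norm_num

lemma posK_xinit (j : Fin n) : PosK z i (xinit n j) := by
  refine ⟨AddMonoidAlgebra.single (Finsupp.single j (1 : ℤ)) (1 : ℚ), 1, ?_, ?_, ?_⟩
  · rw [mlc_single one_ne_zero]; norm_num
  · rw [one_facts.2]; norm_num
  · rw [_root_.map_one, mul_one, evalHom_single, xmon_single, _root_.map_one, one_mul]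

lemma posK_mul {x y : K n} (hx : PosK z i x) (hy : PosK z i y) : PosK z i (x * y) := by
  obtain ⟨f1, g1, hf1, hg1, he1⟩ := hx
  obtain ⟨f2, g2, hf2, hg2, he2⟩ := hy
  have m1 := mul_facts (z := z) (i := i) (ne_zero_of_lc_pos hf1) (ne_zero_of_lc_pos hf2)
  have m2 := mul_facts (z := z) (i := i) (ne_zero_of_lc_pos hg1) (ne_zero_of_lc_pos hg2)
  refine ⟨f1 * f2, g1 * g2, by rw [m1.2.2]; exact mul_pos hf1 hf2,
    by rw [m2.2.2]; exact mul_pos hg1 hg2, ?_⟩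
  rw [_root_.map_mul, _root_.map_mul, ← he1, ← he2]
  ring

lemma posK_add {x y : K n} (hx : PosK z i x) (hy : PosK z i y) : PosK z i (x + y) := by
  obtain ⟨f1, g1, hf1, hg1, he1⟩ := hx
  obtain ⟨f2, g2, hf2, hg2, he2⟩ := hy
  have m1 := mul_facts (z := z) (i := i) (ne_zero_of_lc_pos hf1) (ne_zero_of_lc_pos hg2)
  have m2 := mul_facts (z := z) (i := i) (ne_zero_of_lc_pos hf2) (ne_zero_of_lc_pos hg1)
  have mg := mul_facts (z := z) (i := i) (ne_zero_of_lc_pos hg1) (ne_zero_of_lc_pos hg2)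
  have hl1 : 0 < mlc z i (f1 * g2) := by rw [m1.2.2]; exact mul_pos hf1 hg2
  have hl2 : 0 < mlc z i (f2 * g1) := by rw [m2.2.2]; exact mul_pos hf2 hg1
  rcases le_total (E z i (mdeg z i (f1 * g2))) (E z i (mdeg z i (f2 * g1))) with hle | hle
  · obtain ⟨ha0, hal, -⟩ := add_facts_aux m1.1 m2.1 hl1 hl2 hle
    refine ⟨f1 * g2 + f2 * g1, g1 * g2, hal, by rw [mg.2.2]; exact mul_pos hg1 hg2, ?_⟩
    rw [_root_.map_add, _root_.map_mul, _root_.map_mul, _root_.map_mul, ← he1, ← he2]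
    ring
  · obtain ⟨ha0, hal, -⟩ := add_facts_aux m2.1 m1.1 hl2 hl1 hle
    refine ⟨f1 * g2 + f2 * g1, g1 * g2, by rw [add_comm]; exact hal,
      by rw [mg.2.2]; exact mul_pos hg1 hg2, ?_⟩
    rw [_root_.map_add, _root_.map_mul, _root_.map_mul, _root_.map_mul, ← he1, ← he2]
    ring

lemma posK_div {x y : K n} (hx : PosK z i x) (hy : PosK z i y) : PosK z i (x / y) := by
  obtain ⟨f1, g1, hf1, hg1, he1⟩ := hx
  obtain ⟨f2, g2, hf2, hg2, he2⟩ := hy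
  have m1 := mul_facts (z := z) (i := i) (ne_zero_of_lc_pos hf1) (ne_zero_of_lc_pos hg2)
  have m2 := mul_facts (z := z) (i := i) (ne_zero_of_lc_pos hg1) (ne_zero_of_lc_pos hf2)
  have hF2 : evalHom n f2 ≠ 0 := evalHom_ne_zero (ne_zero_of_lc_pos hf2)
  have hy0 : y ≠ 0 := by
    intro h
    rw [h, zero_mul] at he2
    exact hF2 he2.symm
  refine ⟨f1 * g2, g1 * f2, by rw [m1.2.2]; exact mul_pos hf1 hg2,
    by rw [m2.2.2]; exact mul_pos hg1 hf2, ?_⟩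
  rw [_root_.map_mul, _root_.map_mul, ← he1, ← he2]
  field_simp

lemma posK_pow {x : K n} (hx : PosK z i x) (m : ℕ) : PosK z i (x ^ m) := by
  induction m with
  | zero => rw [pow_zero]; exact posK_one
  | succ m ih => rw [pow_succ]; exact posK_mul ih hx

lemma posK_prod (v : Fin n → K n) (h : ∀ l, PosK z i (v l)) (s : Finset (Fin n)) :
    PosK z i (∏ l ∈ s, v l) :=
  Finset.prod_induction v (PosK z i) (fun _ _ => posK_mul) posK_one (fun l _ => h l)

lemma posK_seed (w : List (Fin n)) :
    ∀ s : Matrix (Fin n) (Fin n) ℤ × (Fin n → K n),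
      (∀ l, PosK z i (s.2 l)) → ∀ l, PosK z i ((w.foldl seedMut s).2 l) := by
  induction w with
  | nil => exact fun s h l => h l
  | cons k' w' ih =>
    intro s h l
    rw [List.foldl_cons]
    refine ih _ (fun l' => ?_) l
    show PosK z i ((Function.update s.2 k' (exch k' s.1 s.2)) l')
    rw [Function.update_apply]
    split_ifs with hh
    · rw [exch]
      refine posK_div (posK_add ?_ ?_) (h k') <;>
        exact posK_prod _ (fun l'' => posK_pow (h l'') _) _
    · exact h l'

lemma lc_pos_of_evalHom {q : LaurentPoly n} (hpos : PosK z i (evalHom n q)) (hq : q ≠ 0) :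
    0 < mlc z i q := by
  obtain ⟨f, g, hf, hg, he⟩ := hpos
  have hqg : q * g = f := by
    apply evalHom_injective
    rw [_root_.map_mul]; exact he
  have := (mul_facts (z := z) (i := i) hq (ne_zero_of_lc_pos hg)).2.2
  rw [hqg] at this
  nlinarith [this, hf, hg]

end Pos

section MaxExp

variable {n : ℕ}

lemma maxExp_eq {q : LaurentPoly n} (hq : q ≠ 0) {i : Fin n} {d : Fin n →₀ ℤ}
    (hmem : d ∈ q.coeff.support) (hmax : ∀ e ∈ q.coeff.support, e i ≤ d i) :
    maxExp q hq i = d i := by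
  rw [maxExp]
  exact le_antisymm (Finset.sup'_le _ _ hmax) (Finset.le_sup' (f := fun e => e i) hmem)

lemma maxExp_mdeg {q : LaurentPoly n} (hq : q ≠ 0) {z i : Fin n} (hz : ∀ j, z ≤ j) :
    maxExp q hq i = mdeg z i q i :=
  maxExp_eq hq (dtop_spec hq).1 (fun e he => E_le_coord hz ((dtop_spec hq).2 e he))

end MaxExp

end MV

/-- **Proposition (final-seed recursion for m-vectors).**
Let the seed at `t` be reached from the initial seed `(B0,(x₁,…,xₙ))` along a word `w`
(with all cluster variables along the way nonzero), and let `t'` be obtained from `t` by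
one further mutation in direction `k`.  If `p ℓ` is a Laurent expansion of `x_{ℓ;t}` and
`p'` is a Laurent expansion of `x_{k;t'}`, all with respect to the initial cluster, then
for every `i`:
`m_i(p') = -m_i(p k) + max( Σ_ℓ m_i(p ℓ)·[(B_t)_{ℓk}]₊ , Σ_ℓ m_i(p ℓ)·[-(B_t)_{ℓk}]₊ )`.
Moreover the initial condition holds: the M-matrix of the initial cluster is the
identity, i.e. any nonzero Laurent expansions `r j` of the initial cluster variables
`x_j` satisfy `m_i(r j) = δ_{ij}`. -/
theorem mvector_final_seed_recursion {n : ℕ} (hn : 1 ≤ n)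
    (B0 : Matrix (Fin n) (Fin n) ℤ) (w : List (Fin n)) (k : Fin n)
    (hnz : ∀ m : ℕ, ∀ i : Fin n, (seedAt B0 (w.take m)).2 i ≠ 0)
    (p : Fin n → LaurentPoly n) (p' : LaurentPoly n)
    (hp : ∀ l, IsLaurentExpansion (xinit n) (p l) ((seedAt B0 w).2 l))
    (hp' : IsLaurentExpansion (xinit n) p' ((seedMut (seedAt B0 w) k).2 k))
    (hp0 : ∀ l, p l ≠ 0) (hp'0 : p' ≠ 0) :
    (∀ i : Fin n,
        maxExp p' hp'0 i =
          -maxExp (p k) (hp0 k) i +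
            max (∑ l, maxExp (p l) (hp0 l) i * max ((seedAt B0 w).1 l k) 0)
              (∑ l, maxExp (p l) (hp0 l) i * max (-(seedAt B0 w).1 l k) 0)) ∧
    (∀ (r : Fin n → LaurentPoly n) (hr0 : ∀ j, r j ≠ 0),
        (∀ j, IsLaurentExpansion (xinit n) (r j) (xinit n j)) →
        ∀ i j, maxExp (r j) (hr0 j) i = if i = j then 1 else 0) := by
  replace hp : ∀ l, lEval (xinit n) (p l) = (seedAt B0 w).2 l := hp
  replace hp' : lEval (xinit n) p' = (seedMut (seedAt B0 w) k).2 k := hp'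
  constructor
  · intro i
    classical
    set z : Fin n := ⟨0, hn⟩ with hzdef
    have hz : ∀ j : Fin n, z ≤ j := fun j => by
      simpa [Fin.le_def, hzdef] using Nat.zero_le j.val
    have hu : ∀ l, (seedAt B0 w).2 l = MV.evalHom n (p l) := fun l =>
      (hp l).symm.trans (MV.lEval_eq _)
    have hposu : ∀ l, MV.PosK z i ((seedAt B0 w).2 l) := by
      intro l
      exact MV.posK_seed w (B0, xinit n) (fun l' => MV.posK_xinit l') l
    have hlc : ∀ l, 0 < MV.mlc z i (p l) := fun l =>
      MV.lc_pos_of_evalHom ((hu l) ▸ hposu l) (hp0 l)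
    set Bt : Matrix (Fin n) (Fin n) ℤ := (seedAt B0 w).1 with hBt
    set a : Fin n → ℕ := fun l => (max (Bt l k) 0).toNat with ha
    set c : Fin n → ℕ := fun l => (max (-Bt l k) 0).toNat with hc
    set P : LaurentPoly n := ∏ l, p l ^ a l with hP
    set Q : LaurentPoly n := ∏ l, p l ^ c l with hQ
    have hukn : (seedAt B0 w).2 k ≠ 0 := by
      rw [hu k]; exact MV.evalHom_ne_zero (hp0 k)
    have hPe : MV.evalHom n P = ∏ l, (seedAt B0 w).2 l ^ a l := by
      rw [hP, _root_.map_prod]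
      exact Finset.prod_congr rfl fun l _ => by rw [_root_.map_pow, hu l]
    have hQe : MV.evalHom n Q = ∏ l, (seedAt B0 w).2 l ^ c l := by
      rw [hQ, _root_.map_prod]
      exact Finset.prod_congr rfl fun l _ => by rw [_root_.map_pow, hu l]
    have h1 : MV.evalHom n p' =
        ((∏ l, (seedAt B0 w).2 l ^ a l) + ∏ l, (seedAt B0 w).2 l ^ c l) /
          (seedAt B0 w).2 k := by
      rw [← MV.lEval_eq, hp']
      show Function.update (seedAt B0 w).2 k (exch k (seedAt B0 w).1 (seedAt B0 w).2) k = _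
      rw [Function.update_self, exch]
    have hex : MV.evalHom n (p' * p k) = MV.evalHom n (P + Q) := by
      rw [_root_.map_mul, _root_.map_add, h1, ← hu k, div_mul_cancel₀ _ hukn, hPe, hQe]
    have heq : p' * p k = P + Q := MV.evalHom_injective hex
    obtain ⟨hP0, hPl, hPd⟩ := MV.prod_facts (z := z) (i := i) p hp0 hlc a Finset.univ
    obtain ⟨hQ0, hQl, hQd⟩ := MV.prod_facts (z := z) (i := i) p hp0 hlc c Finset.univ
    obtain ⟨-, hmd, -⟩ := MV.mul_facts (z := z) (i := i) hp'0 (hp0 k)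
    rw [heq] at hmd
    have hSP : MV.mdeg z i P i = ∑ l, maxExp (p l) (hp0 l) i * max (Bt l k) 0 := by
      rw [hPd i]
      refine Finset.sum_congr rfl fun l _ => ?_
      have h4 : ((a l : ℤ)) = max (Bt l k) 0 := Int.toNat_of_nonneg (le_max_right _ _)
      rw [h4, MV.maxExp_mdeg (hp0 l) hz, mul_comm]
    have hSQ : MV.mdeg z i Q i = ∑ l, maxExp (p l) (hp0 l) i * max (-Bt l k) 0 := by
      rw [hQd i]
      refine Finset.sum_congr rfl fun l _ => ?_
      have h4 : ((c l : ℤ)) = max (-Bt l k) 0 := Int.toNat_of_nonneg (le_max_right _ _)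
      rw [h4, MV.maxExp_mdeg (hp0 l) hz, mul_comm]
    rw [MV.maxExp_mdeg hp'0 hz, MV.maxExp_mdeg (hp0 k) hz, ← hSP, ← hSQ]
    rcases le_total (MV.E z i (MV.mdeg z i P)) (MV.E z i (MV.mdeg z i Q)) with hle | hle
    · obtain ⟨-, -, hsd⟩ := MV.add_facts_aux hP0 hQ0 hPl hQl hle
      have h2 : MV.mdeg z i p' i + MV.mdeg z i (p k) i = MV.mdeg z i Q i := by
        have := congrArg (fun v : Fin n →₀ ℤ => v i) (hmd.symm.trans hsd)
        simpa [Finsupp.add_apply] using this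
      have h3 : MV.mdeg z i P i ≤ MV.mdeg z i Q i := MV.E_le_coord hz hle
      rw [max_eq_right h3]
      omega
    · obtain ⟨-, -, hsd⟩ := MV.add_facts_aux hQ0 hP0 hQl hPl hle
      rw [add_comm Q P] at hsd
      have h2 : MV.mdeg z i p' i + MV.mdeg z i (p k) i = MV.mdeg z i P i := by
        have := congrArg (fun v : Fin n →₀ ℤ => v i) (hmd.symm.trans hsd)
        simpa [Finsupp.add_apply] using this
      have h3 : MV.mdeg z i Q i ≤ MV.mdeg z i P i := MV.E_le_coord hz hle
      rw [max_eq_left h3]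
      omega
  · intro r hr0 hr i j
    replace hr : ∀ j, lEval (xinit n) (r j) = xinit n j := hr
    have h1 : MV.evalHom n (r j) =
        MV.evalHom n (AddMonoidAlgebra.single (Finsupp.single j (1 : ℤ)) (1 : ℚ)) := by
      have hL : MV.evalHom n (r j) = xinit n j := by rw [← MV.lEval_eq]; exact hr j
      rw [hL, MV.evalHom_single, MV.xmon_single, _root_.map_one, one_mul]
    have h2 : r j = AddMonoidAlgebra.single (Finsupp.single j (1 : ℤ)) (1 : ℚ) :=
      MV.evalHom_injective h1
    have hsupp : (r j).coeff.support = {Finsupp.single j (1 : ℤ)} := by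
      rw [h2]; exact Finsupp.support_single_ne_zero _ one_ne_zero
    have h3 : maxExp (r j) (hr0 j) i = (Finsupp.single j (1 : ℤ)) i := by
      refine MV.maxExp_eq (hr0 j) ?_ ?_
      · rw [hsupp]; exact Finset.mem_singleton_self _
      · intro e he; rw [hsupp, Finset.mem_singleton] at he; rw [he]
    rw [h3, Finsupp.single_apply]
    by_cases hij : i = j
    · subst hij; simp
    · rw [if_neg (Ne.symm hij), if_neg hij]
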